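/- Let 0 < s < 1 and for x > 0 define M₁(s, x) := ((1 − s + s x²)/x) · erf( x √s / √(2(1 − s)) ) + √(2 s (1 − s) / π) · exp( − s x² / (2(1 − s)) ). Then ∫₀^∞ x² · M₁(s, x) · exp(-x²/2) dx = 2 √s. -/

import Mathlib

open Real MeasureTheory Set

open Filter Topology

noncomputable def erf (z : ℝ) : ℝ := 2 / Real.sqrt π * ∫ u in (0:ℝ)..z, Real.exp (-u ^ 2)

/-- Mean of the Brownian meander at time `s` conditioned to equal `x` at time 1. -/
noncomputable def M1 (s x : ℝ) : ℝ :=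
  (1 - s + s * x ^ 2) / x * erf (x * Real.sqrt s / Real.sqrt (2 * (1 - s))) +
    Real.sqrt (2 * s * (1 - s) / π) * Real.exp (-(s * x ^ 2) / (2 * (1 - s)))

lemma erf_zero : erf 0 = 0 := by simp [erf]

lemma hasDerivAt_erf (z : ℝ) : HasDerivAt erf (2 / Real.sqrt π * Real.exp (-z ^ 2)) z := by
  have hc : Continuous fun u : ℝ => Real.exp (-u ^ 2) := by continuity
  have h : HasDerivAt (fun z => ∫ u in (0:ℝ)..z, Real.exp (-u ^ 2)) (Real.exp (-z ^ 2)) z :=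
    intervalIntegral.integral_hasDerivAt_right (hc.intervalIntegrable _ _)
      hc.aestronglyMeasurable.stronglyMeasurableAtFilter hc.continuousAt
  exact h.const_mul (2 / Real.sqrt π)

lemma continuous_erf : Continuous erf :=
  continuous_iff_continuousAt.2 fun z => (hasDerivAt_erf z).continuousAt

lemma erf_nonneg {z : ℝ} (hz : 0 ≤ z) : 0 ≤ erf z := by
  apply mul_nonneg (by positivity)
  apply intervalIntegral.integral_nonneg hz
  intro u _; positivity

lemma erf_le_one {z : ℝ} (hz : 0 ≤ z) : erf z ≤ 1 := by
  have hint : IntegrableOn (fun u : ℝ => Real.exp (-u ^ 2)) (Ioi 0) := by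
    simpa using (integrable_exp_neg_mul_sq one_pos).integrableOn
  have h1 : (∫ u in (0:ℝ)..z, Real.exp (-u ^ 2)) ≤ ∫ u in Ioi (0:ℝ), Real.exp (-u ^ 2) := by
    rw [intervalIntegral.integral_of_le hz]
    apply setIntegral_mono_set hint (by filter_upwards with u using (Real.exp_pos _).le)
    filter_upwards with u hu using hu.1
  have h2 : (∫ u in Ioi (0:ℝ), Real.exp (-u ^ 2)) = Real.sqrt π / 2 := by
    simpa using integral_gaussian_Ioi 1
  rw [erf]
  calc 2 / Real.sqrt π * ∫ u in (0:ℝ)..z, Real.exp (-u ^ 2)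
      ≤ 2 / Real.sqrt π * (Real.sqrt π / 2) := by
        apply mul_le_mul_of_nonneg_left (h1.trans_eq h2) (by positivity)
    _ = 1 := by
        field_simp
lemma tendsto_erf_atTop : Tendsto erf atTop (𝓝 1) := by
  have hint : IntegrableOn (fun u : ℝ => Real.exp (-u ^ 2)) (Ioi 0) := by
    simpa using (integrable_exp_neg_mul_sq one_pos).integrableOn
  have h := intervalIntegral_tendsto_integral_Ioi 0 hint tendsto_id
  have h2 : (∫ u in Ioi (0:ℝ), Real.exp (-u ^ 2)) = Real.sqrt π / 2 := by
    simpa using integral_gaussian_Ioi 1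
  have := (h.const_mul (2 / Real.sqrt π))
  rw [h2] at this
  have heq : 2 / Real.sqrt π * (Real.sqrt π / 2) = 1 := by
    have : Real.sqrt π ≠ 0 := by positivity
    field_simp
  rw [heq] at this
  exact this


lemma integrableOn_pow_mul_exp (n : ℕ) {b : ℝ} (hb : 0 < b) :
    IntegrableOn (fun x : ℝ => x ^ n * Real.exp (-b * x ^ 2)) (Ioi 0) := by
  have := integrableOn_rpow_mul_exp_neg_mul_sq hb (s := n)
    (by have : (0:ℝ) ≤ n := Nat.cast_nonneg n; linarith : (-1:ℝ) < n)
  simpa [Real.rpow_natCast] using this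

lemma tendsto_pow_mul_exp (n : ℕ) {b : ℝ} (hb : 0 < b) :
    Tendsto (fun x : ℝ => x ^ n * Real.exp (-b * x ^ 2)) atTop (𝓝 0) := by
  have h := (rpow_mul_exp_neg_mul_sq_isLittleO_exp_neg hb (n : ℝ)).tendsto_zero_of_tendsto
    (Real.tendsto_exp_atBot.comp <|
      tendsto_id.const_mul_atTop_of_neg (neg_lt_zero.mpr one_half_pos))
  apply h.congr'
  filter_upwards [eventually_gt_atTop (0:ℝ)] with x hx
  rw [Real.rpow_natCast]

lemma hasDerivAt_erf_mul (c x : ℝ) :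
    HasDerivAt (fun x => erf (c * x)) (2 / Real.sqrt π * Real.exp (-(c * x) ^ 2) * c) x :=
  (hasDerivAt_erf (c * x)).comp x (by simpa using (hasDerivAt_id x).const_mul c)

lemma hasDerivAt_gauss (x : ℝ) :
    HasDerivAt (fun x : ℝ => Real.exp (-x ^ 2 / 2)) (Real.exp (-x ^ 2 / 2) * (-x)) x := by
  have h : HasDerivAt (fun x : ℝ => -x ^ 2 / 2) (-x) x := by
    have := ((hasDerivAt_pow 2 x).neg.div_const 2)
    refine this.congr_deriv ?_
    ring
  exact h.exp

lemma integrableOn_pow_gauss_erf (n : ℕ) {c : ℝ} (hc : 0 < c) :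
    IntegrableOn (fun x : ℝ => x ^ n * Real.exp (-x ^ 2 / 2) * erf (c * x)) (Ioi 0) := by
  apply Integrable.mono' ((integrableOn_pow_mul_exp n one_half_pos).congr_fun
    (fun x _ => by rw [show -(1/2 : ℝ) * x ^ 2 = -x ^ 2 / 2 by ring] : ∀ x ∈ Ioi (0:ℝ), x ^ n * Real.exp (-(1/2) * x ^ 2)
      = x ^ n * Real.exp (-x ^ 2 / 2)) measurableSet_Ioi)
  · exact (((continuous_pow n).mul (by continuity)).mul
      (continuous_erf.comp (continuous_const.mul continuous_id))).aestronglyMeasurable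
  · filter_upwards [ae_restrict_mem measurableSet_Ioi] with x hx
    have hx0 : (0:ℝ) < x := hx
    have h1 : 0 ≤ erf (c * x) := erf_nonneg (by positivity)
    have h2 : erf (c * x) ≤ 1 := erf_le_one (by positivity)
    rw [Real.norm_eq_abs, abs_of_nonneg (by positivity)]
    calc x ^ n * Real.exp (-x ^ 2 / 2) * erf (c * x)
        ≤ x ^ n * Real.exp (-x ^ 2 / 2) * 1 := by
          apply mul_le_mul_of_nonneg_left h2 (by positivity)
      _ = x ^ n * Real.exp (-x ^ 2 / 2) := by ring

lemma tendsto_pow_gauss_erf (n : ℕ) {c : ℝ} (hc : 0 < c) :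
    Tendsto (fun x : ℝ => x ^ n * Real.exp (-x ^ 2 / 2) * erf (c * x)) atTop (𝓝 0) := by
  apply squeeze_zero' (g := fun x : ℝ => x ^ n * Real.exp (-(1/2) * x ^ 2))
  · filter_upwards [eventually_gt_atTop (0:ℝ)] with x hx
    have h1 : 0 ≤ erf (c * x) := erf_nonneg (by positivity)
    positivity
  · filter_upwards [eventually_gt_atTop (0:ℝ)] with x hx
    have h2 : erf (c * x) ≤ 1 := erf_le_one (by positivity)
    have : -x ^ 2 / 2 = -(1/2) * x ^ 2 := by ring
    rw [this]
    nlinarith [Real.exp_pos (-(1/2) * x ^ 2), pow_pos hx n,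
      mul_pos (pow_pos hx n) (Real.exp_pos (-(1/2) * x ^ 2))]
  · exact tendsto_pow_mul_exp n one_half_pos

lemma L1 {a b : ℝ} (ha : 0 < a) (hb : 0 < b) (hab : a ^ 2 + 1/2 = b) :
    ∫ x in Ioi (0:ℝ), x * Real.exp (-x ^ 2 / 2) * erf (a * x) = a / Real.sqrt b := by
  have hsb : 0 < Real.sqrt b := Real.sqrt_pos.2 hb
  have e1 : ∀ x : ℝ, Real.exp (-(Real.sqrt b * x) ^ 2)
      = Real.exp (-x ^ 2 / 2) * Real.exp (-(a * x) ^ 2) := by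
    intro x
    rw [← Real.exp_add]
    congr 1
    have : (Real.sqrt b * x) ^ 2 = b * x ^ 2 := by
      rw [mul_pow, Real.sq_sqrt hb.le]
    rw [this, ← hab]
    ring
  have hderiv : ∀ x ∈ Ici (0:ℝ),
      HasDerivAt (fun x => -(Real.exp (-x ^ 2 / 2) * erf (a * x))
          + a / Real.sqrt b * erf (Real.sqrt b * x))
        (x * Real.exp (-x ^ 2 / 2) * erf (a * x)) x := by
    intro x _
    have h1 := ((hasDerivAt_gauss x).mul (hasDerivAt_erf_mul a x)).neg
    have h2 := (hasDerivAt_erf_mul (Real.sqrt b) x).const_mul (a / Real.sqrt b)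
    refine (h1.add h2).congr_deriv ?_
    rw [e1 x]
    field_simp
    ring
  have hint : IntegrableOn (fun x : ℝ => x * Real.exp (-x ^ 2 / 2) * erf (a * x)) (Ioi 0) := by
    simpa using integrableOn_pow_gauss_erf 1 ha
  have htends : Tendsto (fun x => -(Real.exp (-x ^ 2 / 2) * erf (a * x))
      + a / Real.sqrt b * erf (Real.sqrt b * x)) atTop (𝓝 (a / Real.sqrt b)) := by
    have t1 : Tendsto (fun x : ℝ => Real.exp (-x ^ 2 / 2) * erf (a * x)) atTop (𝓝 0) := by
      simpa using tendsto_pow_gauss_erf 0 ha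
    have t2 : Tendsto (fun x : ℝ => erf (Real.sqrt b * x)) atTop (𝓝 1) :=
      tendsto_erf_atTop.comp (tendsto_id.const_mul_atTop hsb)
    have := (t1.neg).add ((t2.const_mul (a / Real.sqrt b)))
    simpa using this
  have := integral_Ioi_of_hasDerivAt_of_tendsto' hderiv hint htends
  simpa [erf_zero] using this

lemma hasDerivAt_gaussb (b x : ℝ) :
    HasDerivAt (fun x : ℝ => Real.exp (-b * x ^ 2)) (Real.exp (-b * x ^ 2) * (-b * (2 * x))) x := by
  have h : HasDerivAt (fun x : ℝ => -b * x ^ 2) (-b * (2 * x)) x := by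
    have := (hasDerivAt_pow 2 x).const_mul (-b)
    refine this.congr_deriv ?_
    ring
  exact h.exp

lemma L3 {b : ℝ} (hb : 0 < b) :
    ∫ x in Ioi (0:ℝ), x ^ 2 * Real.exp (-b * x ^ 2)
      = Real.sqrt π / (4 * b * Real.sqrt b) := by
  have hsb : 0 < Real.sqrt b := Real.sqrt_pos.2 hb
  have hsp : 0 < Real.sqrt π := Real.sqrt_pos.2 pi_pos
  have hsbne : Real.sqrt b ≠ 0 := ne_of_gt hsb
  have hspne : Real.sqrt π ≠ 0 := ne_of_gt hsp
  have hbne : b ≠ 0 := ne_of_gt hb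
  have e1 : ∀ x : ℝ, (Real.sqrt b * x) ^ 2 = b * x ^ 2 := fun x => by
    rw [mul_pow, Real.sq_sqrt hb.le]
  have hderiv : ∀ x ∈ Ici (0:ℝ),
      HasDerivAt (fun x => -(1/(2*b)) * (x * Real.exp (-b * x ^ 2))
          + 1/(2*b) * (Real.sqrt π/(2*Real.sqrt b)) * erf (Real.sqrt b * x))
        (x ^ 2 * Real.exp (-b * x ^ 2)) x := by
    intro x _
    have h1 := ((hasDerivAt_id x).mul (hasDerivAt_gaussb b x)).const_mul (-(1/(2*b)))
    have h2 := (hasDerivAt_erf_mul (Real.sqrt b) x).const_mul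
      (1/(2*b) * (Real.sqrt π/(2*Real.sqrt b)))
    refine (h1.add h2).congr_deriv ?_
    rw [e1 x]
    simp only [id, Pi.mul_apply]
    field_simp
    ring
  have hint : IntegrableOn (fun x : ℝ => x ^ 2 * Real.exp (-b * x ^ 2)) (Ioi 0) :=
    integrableOn_pow_mul_exp 2 hb
  have htends : Tendsto (fun x => -(1/(2*b)) * (x * Real.exp (-b * x ^ 2))
      + 1/(2*b) * (Real.sqrt π/(2*Real.sqrt b)) * erf (Real.sqrt b * x)) atTop
      (𝓝 (Real.sqrt π / (4 * b * Real.sqrt b))) := by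
    have t1 : Tendsto (fun x : ℝ => x * Real.exp (-b * x ^ 2)) atTop (𝓝 0) := by
      simpa using tendsto_pow_mul_exp 1 hb
    have t2 : Tendsto (fun x : ℝ => erf (Real.sqrt b * x)) atTop (𝓝 1) :=
      tendsto_erf_atTop.comp (tendsto_id.const_mul_atTop hsb)
    have := (t1.const_mul (-(1/(2*b)))).add
      (t2.const_mul (1/(2*b) * (Real.sqrt π/(2*Real.sqrt b))))
    have heq : -(1/(2*b)) * 0 + 1/(2*b) * (Real.sqrt π/(2*Real.sqrt b)) * 1
        = Real.sqrt π / (4 * b * Real.sqrt b) := by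
        field_simp
        try ring
        try tauto
    rwa [heq] at this
  have := integral_Ioi_of_hasDerivAt_of_tendsto' hderiv hint htends
  simpa [erf_zero] using this

lemma L2 {a b : ℝ} (ha : 0 < a) (hb : 0 < b) (hab : a ^ 2 + 1/2 = b) :
    ∫ x in Ioi (0:ℝ), x ^ 3 * Real.exp (-x ^ 2 / 2) * erf (a * x)
      = a / Real.sqrt b * (1/(2*b) + 2) := by
  have hsb : 0 < Real.sqrt b := Real.sqrt_pos.2 hb
  have hsp : 0 < Real.sqrt π := Real.sqrt_pos.2 pi_pos
  have hsbne : Real.sqrt b ≠ 0 := ne_of_gt hsb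
  have hspne : Real.sqrt π ≠ 0 := ne_of_gt hsp
  have hbne : b ≠ 0 := ne_of_gt hb
  have e1 : ∀ x : ℝ, Real.exp (-(Real.sqrt b * x) ^ 2)
      = Real.exp (-x ^ 2 / 2) * Real.exp (-(a * x) ^ 2) := by
    intro x
    rw [← Real.exp_add]
    congr 1
    rw [mul_pow, Real.sq_sqrt hb.le, mul_pow, ← hab]
    ring
  have e2 : ∀ x : ℝ, Real.exp (-b * x ^ 2)
      = Real.exp (-x ^ 2 / 2) * Real.exp (-(a * x) ^ 2) := by
    intro x
    rw [← Real.exp_add]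
    congr 1
    rw [mul_pow, ← hab]
    ring
  have hderiv : ∀ x ∈ Ici (0:ℝ),
      HasDerivAt (fun x => -((x ^ 2 + 2) * Real.exp (-x ^ 2 / 2) * erf (a * x))
          - a/(Real.sqrt π * b) * (x * Real.exp (-b * x ^ 2))
          + a / Real.sqrt b * (1/(2*b) + 2) * erf (Real.sqrt b * x))
        (x ^ 3 * Real.exp (-x ^ 2 / 2) * erf (a * x)) x := by
    intro x _
    have h0 : HasDerivAt (fun x : ℝ => x ^ 2 + 2) (2 * x) x := by
      simpa using (hasDerivAt_pow 2 x).add_const 2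
    have h1 := (((h0.mul (hasDerivAt_gauss x)).mul (hasDerivAt_erf_mul a x))).neg
    have h2 := ((hasDerivAt_id x).mul (hasDerivAt_gaussb b x)).const_mul (a/(Real.sqrt π * b))
    have h3 := (hasDerivAt_erf_mul (Real.sqrt b) x).const_mul (a / Real.sqrt b * (1/(2*b) + 2))
    refine ((h1.sub h2).add h3).congr_deriv ?_
    rw [e1 x, e2 x]
    simp only [id, Pi.mul_apply]
    field_simp
    ring
  have hint : IntegrableOn (fun x : ℝ => x ^ 3 * Real.exp (-x ^ 2 / 2) * erf (a * x)) (Ioi 0) :=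
    integrableOn_pow_gauss_erf 3 ha
  have htends : Tendsto (fun x => -((x ^ 2 + 2) * Real.exp (-x ^ 2 / 2) * erf (a * x))
      - a/(Real.sqrt π * b) * (x * Real.exp (-b * x ^ 2))
      + a / Real.sqrt b * (1/(2*b) + 2) * erf (Real.sqrt b * x)) atTop
      (𝓝 (a / Real.sqrt b * (1/(2*b) + 2))) := by
    have t1 : Tendsto (fun x : ℝ => (x ^ 2 + 2) * Real.exp (-x ^ 2 / 2) * erf (a * x))
        atTop (𝓝 0) := by
      have := (tendsto_pow_gauss_erf 2 ha).add ((tendsto_pow_gauss_erf 0 ha).const_mul 2)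
      simp only [add_zero, mul_zero, zero_add] at this
      apply this.congr
      intro x
      ring
    have t2 : Tendsto (fun x : ℝ => x * Real.exp (-b * x ^ 2)) atTop (𝓝 0) := by
      simpa using tendsto_pow_mul_exp 1 hb
    have t3 : Tendsto (fun x : ℝ => erf (Real.sqrt b * x)) atTop (𝓝 1) :=
      tendsto_erf_atTop.comp (tendsto_id.const_mul_atTop hsb)
    have := (t1.neg.sub (t2.const_mul (a/(Real.sqrt π * b)))).add
      (t3.const_mul (a / Real.sqrt b * (1/(2*b) + 2)))
    simpa using this
  have := integral_Ioi_of_hasDerivAt_of_tendsto' hderiv hint htends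
  simpa [erf_zero] using this

theorem stmt11 (s : ℝ) (hs : 0 < s) (hs1 : s < 1) :
    ∫ x in Ioi (0 : ℝ), x ^ 2 * M1 s x * Real.exp (-x ^ 2 / 2) = 2 * Real.sqrt s := by
  have h1s : 0 < 1 - s := by linarith
  have ht : 0 < 2 * (1 - s) := by linarith
  set a : ℝ := Real.sqrt s / Real.sqrt (2 * (1 - s)) with ha_def
  set b : ℝ := 1 / (2 * (1 - s)) with hb_def
  set c : ℝ := Real.sqrt (2 * s * (1 - s) / π) with hc_def
  have hss : 0 < Real.sqrt s := Real.sqrt_pos.2 hs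
  have hst : 0 < Real.sqrt (2 * (1 - s)) := Real.sqrt_pos.2 ht
  have ha : 0 < a := div_pos hss hst
  have hb : 0 < b := by positivity
  have hab : a ^ 2 + 1/2 = b := by
    rw [ha_def, hb_def, div_pow, Real.sq_sqrt hs.le, Real.sq_sqrt ht.le]
    field_simp
    ring
  -- pointwise identity
  have hpt : ∀ x ∈ Ioi (0:ℝ), x ^ 2 * M1 s x * Real.exp (-x ^ 2 / 2)
      = (1 - s) * (x * Real.exp (-x ^ 2 / 2) * erf (a * x))
        + s * (x ^ 3 * Real.exp (-x ^ 2 / 2) * erf (a * x))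
        + c * (x ^ 2 * Real.exp (-b * x ^ 2)) := by
    intro x hx
    have hx0 : (x:ℝ) ≠ 0 := ne_of_gt hx
    have harg : x * Real.sqrt s / Real.sqrt (2 * (1 - s)) = a * x := by
      rw [ha_def]; ring
    have hexp : Real.exp (-(s * x ^ 2) / (2 * (1 - s))) * Real.exp (-x ^ 2 / 2)
        = Real.exp (-b * x ^ 2) := by
      rw [← Real.exp_add, hb_def]
      congr 1
      field_simp
      ring
    rw [M1, harg, ← hexp, ← hc_def]
    field_simp
  rw [setIntegral_congr_fun measurableSet_Ioi hpt]
  have I1 : IntegrableOn (fun x : ℝ => (1 - s) * (x * Real.exp (-x ^ 2 / 2) * erf (a * x)))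
      (Ioi 0) := by
    have := (integrableOn_pow_gauss_erf 1 ha).const_mul (1 - s)
    simpa [IntegrableOn] using this
  have I2 : IntegrableOn (fun x : ℝ => s * (x ^ 3 * Real.exp (-x ^ 2 / 2) * erf (a * x)))
      (Ioi 0) := (integrableOn_pow_gauss_erf 3 ha).const_mul s
  have I3 : IntegrableOn (fun x : ℝ => c * (x ^ 2 * Real.exp (-b * x ^ 2)))
      (Ioi 0) := (integrableOn_pow_mul_exp 2 hb).const_mul c
  have I12 : IntegrableOn (fun x : ℝ => (1 - s) * (x * Real.exp (-x ^ 2 / 2) * erf (a * x))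
      + s * (x ^ 3 * Real.exp (-x ^ 2 / 2) * erf (a * x))) (Ioi 0) := I1.add I2
  rw [integral_add I12 I3, integral_add I1 I2, integral_const_mul, integral_const_mul,
    integral_const_mul]
  have e1 : ∫ x in Ioi (0:ℝ), x * Real.exp (-x ^ 2 / 2) * erf (a * x) = a / Real.sqrt b :=
    L1 ha hb hab
  rw [e1, L2 ha hb hab, L3 hb]
  -- algebra
  have hsqb : Real.sqrt b = (Real.sqrt (2 * (1 - s)))⁻¹ := by
    rw [hb_def, one_div, Real.sqrt_inv]
  have hadb : a / Real.sqrt b = Real.sqrt s := by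
    rw [hsqb, ha_def, div_inv_eq_mul, div_mul_cancel₀ _ (ne_of_gt hst)]
  have h2b : 1 / (2 * b) = 1 - s := by
    rw [hb_def]
    field_simp
  have hc2 : c = Real.sqrt s * Real.sqrt (2 * (1 - s)) / Real.sqrt π := by
    rw [hc_def, show 2 * s * (1 - s) / π = s * (2 * (1 - s)) / π by ring,
      Real.sqrt_div (by positivity), Real.sqrt_mul hs.le]
  have hlast : c * (Real.sqrt π / (4 * b * Real.sqrt b)) = Real.sqrt s * (1 - s) ^ 2 := by
    rw [hc2, hsqb, hb_def]
    have hpne : Real.sqrt π ≠ 0 := ne_of_gt (Real.sqrt_pos.2 pi_pos)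
    have h2 : Real.sqrt 2 * Real.sqrt 2 = 2 := Real.mul_self_sqrt (by norm_num)
    have h3 : Real.sqrt (1 - s) * Real.sqrt (1 - s) = 1 - s := Real.mul_self_sqrt h1s.le
    have h4 : Real.sqrt (2 * (1 - s)) ^ 2 = 2 * (1 - s) := Real.sq_sqrt ht.le
    field_simp
    linear_combination (2*(1-s)*Real.sqrt s*Real.sqrt π*(Real.sqrt (1-s)*Real.sqrt (1-s)))*h2
      + (4*(1-s)*Real.sqrt s*Real.sqrt π)*h3 + 2*h4
      + Real.sqrt s*Real.sqrt π*(2*s-2)*(Real.sqrt (1-s)*Real.sqrt (1-s)*h2 + 2*h3)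
  rw [hadb, h2b, hlast]
  ring
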